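/- Let A be a unital complex C*-algebra with a tracial state τ and associated 2-norm ‖x‖₂ := (Re τ(x* x))^{1/2}. Let 0 < ε ≤ 1 and suppose y = u · a where u ∈ A is unitary, a ∈ A satisfies 0 ≤ a ≤ 1, and ‖y‖₂ ≥ 1 - ε. Then ‖y - u‖₂ ≤ 2√ε. -/

import Mathlib

open scoped ComplexOrder

/-- If `y = u a` with `u` unitary, `0 ≤ a ≤ 1`, and `‖y‖₂ ≥ 1 - ε` for `0 < ε ≤ 1`,
then `‖y - u‖₂ ≤ 2√ε`, where `‖x‖₂ = √(Re τ(x* x))` for a tracial state `τ`. -/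
theorem two_norm_sub_unitary_polar_part_le
    {A : Type*} [CStarAlgebra A] [PartialOrder A] [StarOrderedRing A]
    (τ : A →ₗ[ℂ] ℂ)
    (hτ1 : τ 1 = 1)
    (hτpos : ∀ x : A, 0 ≤ τ (star x * x))
    (hτtr : ∀ x y : A, τ (x * y) = τ (y * x))
    (ε : ℝ) (hε0 : 0 < ε) (hε1 : ε ≤ 1)
    (y u a : A)
    (hu : star u * u = 1 ∧ u * star u = 1)
    (ha0 : 0 ≤ a) (ha1 : a ≤ 1)
    (hy : y = u * a)
    (hynorm : 1 - ε ≤ Real.sqrt (τ (star y * y)).re) :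
    Real.sqrt (τ (star (y - u) * (y - u))).re ≤ 2 * Real.sqrt ε := by
  have hsa : star a = a := (IsSelfAdjoint.of_nonneg ha0).star_eq
  -- τ is nonneg (real part) on nonneg elements
  have tpos : ∀ x : A, 0 ≤ x → 0 ≤ (τ x).re := by
    intro x hx
    have hs : CFC.sqrt x * CFC.sqrt x = x := CFC.sqrt_mul_sqrt_self x hx
    have hss : star (CFC.sqrt x) = CFC.sqrt x :=
      (IsSelfAdjoint.of_nonneg (CFC.sqrt_nonneg x)).star_eq
    have := hτpos (CFC.sqrt x)
    rw [hss, hs] at this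
    exact (Complex.nonneg_iff.mp this).1
  -- star y * y = a * a
  have hyy : star y * y = a * a := by
    subst hy
    rw [star_mul, hsa, mul_assoc, ← mul_assoc (star u), hu.1, one_mul]
  -- star (y - u) * (y - u) = (1 - a) * (1 - a)
  have hkey : star (y - u) * (y - u) = (1 - a) * (1 - a) := by
    subst hy
    have h1 : u * a - u = u * (a - 1) := by noncomm_ring
    have h2 : star (u * a - u) = (a - 1) * star u := by
      rw [star_sub, star_mul, hsa, sub_mul, one_mul]
    rw [h2, h1]
    calc (a - 1) * star u * (u * (a - 1))
        = (a - 1) * (star u * u) * (a - 1) := by noncomm_ring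
      _ = (1 - a) * (1 - a) := by rw [hu.1]; noncomm_ring
  -- a - a * a is nonneg
  have haa : (0 : A) ≤ a - a * a := by
    set s := CFC.sqrt a with hsdef
    have hs : s * s = a := CFC.sqrt_mul_sqrt_self a ha0
    have hss : star s = s := (IsSelfAdjoint.of_nonneg (CFC.sqrt_nonneg a)).star_eq
    have h1a : (0 : A) ≤ 1 - a := sub_nonneg.2 ha1
    have hc := star_left_conjugate_nonneg h1a s
    rw [hss] at hc
    have heq : s * (1 - a) * s = a - a * a := by rw [← hs]; noncomm_ring
    rwa [heq] at hc
  -- bound on τ(a*a).re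
  have haann : 0 ≤ (τ (a * a)).re := by
    have := hτpos a; rw [hsa] at this
    exact (Complex.nonneg_iff.mp this).1
  have hsq : (1 - ε) ^ 2 ≤ (τ (a * a)).re := by
    rw [hyy] at hynorm
    have h0 : (0:ℝ) ≤ 1 - ε := by linarith
    calc (1 - ε) ^ 2 ≤ (Real.sqrt (τ (a * a)).re) ^ 2 := by
          apply pow_le_pow_left₀ h0 hynorm
      _ = (τ (a * a)).re := Real.sq_sqrt haann
  -- split τ((1-a)(1-a))
  have hτsplit : τ ((1 - a) * (1 - a)) = τ 1 - τ (a * a) - τ ((a - a * a) + (a - a * a)) := by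
    have h : (1 - a) * (1 - a) = (1 - a * a) - ((a - a * a) + (a - a * a)) := by noncomm_ring
    rw [h, map_sub, map_sub]
  have hdnn : 0 ≤ (τ ((a - a * a) + (a - a * a))).re := tpos _ (add_nonneg haa haa)
  have hT : (τ ((1 - a) * (1 - a))).re ≤ 4 * ε := by
    rw [hτsplit, hτ1]
    simp only [Complex.sub_re, Complex.one_re]
    nlinarith
  rw [hkey]
  calc Real.sqrt (τ ((1 - a) * (1 - a))).re ≤ Real.sqrt (4 * ε) := Real.sqrt_le_sqrt hT
    _ = 2 * Real.sqrt ε := by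
        rw [show (4:ℝ) * ε = (2 * Real.sqrt ε) ^ 2 by
          rw [mul_pow, Real.sq_sqrt hε0.le]; ring]
        exact Real.sqrt_sq (by positivity)
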